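/- Let y : [0, T) → ℝ be continuous and nonnegative with y(t) ≤ y_0 + 5∫_0^t y(s)³ ds for all t, where y_0 > 0. Then y(t) ≤ 2 y_0 for all t ≤ min(T, 1/(40 y_0²)). -/

import Mathlib

open Real MeasureTheory Set

/-- Nonlinear Gronwall bootstrap (Proposition 5.1): if `y` is continuous and
nonnegative on `[0, T)` with `y t ≤ y₀ + 5∫₀^t y(s)³ ds` and `y₀ > 0`, then
`y t ≤ 2 y₀` for `t ≤ min(T, 1/(40 y₀²))`. -/
theorem nonlinear_gronwall_bootstrap (T y0 : ℝ) (y : ℝ → ℝ)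
    (hy0 : 0 < y0)
    (hcont : ContinuousOn y (Set.Ico 0 T))
    (hnonneg : ∀ t ∈ Set.Ico (0 : ℝ) T, 0 ≤ y t)
    (hineq : ∀ t ∈ Set.Ico (0 : ℝ) T, y t ≤ y0 + 5 * ∫ s in (0 : ℝ)..t, (y s) ^ 3) :
    ∀ t ∈ Set.Ico (0 : ℝ) T, t ≤ 1 / (40 * y0 ^ 2) → y t ≤ 2 * y0 := by
  intro t0 ht0 ht0le
  by_contra hgt
  push_neg at hgt
  obtain ⟨ht00, ht0T⟩ := ht0
  set S : Set ℝ := {t | t ∈ Set.Icc (0:ℝ) t0 ∧ 2 * y0 < y t} with hS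
  have hne : t0 ∈ S := ⟨⟨ht00, le_refl _⟩, hgt⟩
  have hbdd : BddBelow S := ⟨0, fun x hx => hx.1.1⟩
  set τ := sInf S with hτ
  have hτ0 : 0 ≤ τ := le_csInf ⟨t0, hne⟩ (fun x hx => hx.1.1)
  have hτt0 : τ ≤ t0 := csInf_le hbdd hne
  have hsub : Set.Icc (0:ℝ) τ ⊆ Set.Ico (0:ℝ) T := fun x hx =>
    ⟨hx.1, lt_of_le_of_lt (le_trans hx.2 hτt0) ht0T⟩
  have hsub2 : Set.Icc (0:ℝ) t0 ⊆ Set.Ico (0:ℝ) T := fun x hx =>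
    ⟨hx.1, lt_of_le_of_lt hx.2 ht0T⟩
  -- y τ ≥ 2 y0 via closure
  have hclosed : IsClosed (Set.Icc (0:ℝ) t0 ∩ y ⁻¹' Set.Ici (2 * y0)) :=
    (hcont.mono hsub2).preimage_isClosed_of_isClosed isClosed_Icc isClosed_Ici
  have hτC : τ ∈ Set.Icc (0:ℝ) t0 ∩ y ⁻¹' Set.Ici (2 * y0) := by
    have h1 : τ ∈ closure S := csInf_mem_closure ⟨t0, hne⟩ hbdd
    have h2 : S ⊆ Set.Icc (0:ℝ) t0 ∩ y ⁻¹' Set.Ici (2 * y0) :=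
      fun x hx => ⟨hx.1, le_of_lt hx.2⟩
    exact hclosed.closure_subset_iff.mpr h2 h1
  have hyτge : 2 * y0 ≤ y τ := hτC.2
  -- y s ≤ 2 y0 for s < τ
  have hlt : ∀ s, 0 ≤ s → s < τ → y s ≤ 2 * y0 := by
    intro s hs0 hsτ
    by_contra h
    push_neg at h
    have : s ∈ S := ⟨⟨hs0, le_trans (le_of_lt hsτ) hτt0⟩, h⟩
    exact absurd (csInf_le hbdd this) (not_le.mpr hsτ)
  -- integrability
  have hcτ : ContinuousOn (fun s => (y s) ^ 3) (Set.uIcc (0:ℝ) τ) := by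
    rw [Set.uIcc_of_le hτ0]
    exact ((hcont.mono hsub).pow 3)
  have hint : IntervalIntegrable (fun s => (y s) ^ 3) volume 0 τ :=
    hcτ.intervalIntegrable
  -- a.e. bound
  have hae : ∀ᵐ s ∂(volume.restrict (Set.Icc (0:ℝ) τ)), (y s) ^ 3 ≤ (2 * y0) ^ 3 := by
    have hzero : (volume.restrict (Set.Icc (0:ℝ) τ)) {τ} = 0 :=
      le_antisymm (le_trans (Measure.restrict_le_self _) (by simp)) zero_le
    have hne' : ∀ᵐ s ∂(volume.restrict (Set.Icc (0:ℝ) τ)), s ≠ τ := by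
      rw [Filter.eventually_iff, mem_ae_iff]
      convert hzero using 2
      ext x; simp
    filter_upwards [ae_restrict_mem measurableSet_Icc, hne'] with s hs hsne
    have hslt : s < τ := lt_of_le_of_ne hs.2 hsne
    have hy2 : y s ≤ 2 * y0 := hlt s hs.1 hslt
    have hy0' : 0 ≤ y s := hnonneg s (hsub ⟨hs.1, hs.2⟩)
    exact pow_le_pow_left₀ hy0' hy2 3
  have hintmono : (∫ s in (0:ℝ)..τ, (y s) ^ 3) ≤ ∫ s in (0:ℝ)..τ, (2 * y0) ^ 3 :=
    intervalIntegral.integral_mono_ae_restrict hτ0 hint (intervalIntegrable_const) hae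
  have hconst : (∫ s in (0:ℝ)..τ, (2 * y0) ^ 3) = τ * (2 * y0) ^ 3 := by
    simp [mul_comm]
  have hτmem : τ ∈ Set.Ico (0:ℝ) T := ⟨hτ0, lt_of_le_of_lt hτt0 ht0T⟩
  have hkey : y τ ≤ y0 + 40 * y0 ^ 3 * τ := by
    have := hineq τ hτmem
    have h2 : y0 + 5 * ∫ s in (0:ℝ)..τ, (y s) ^ 3 ≤ y0 + 5 * (τ * (2 * y0) ^ 3) := by
      nlinarith [hintmono, hconst]
    nlinarith [this, h2]
  -- case split
  rcases lt_or_eq_of_le hτt0 with hcase | hcase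
  · have hτlt : τ < 1 / (40 * y0 ^ 2) := lt_of_lt_of_le hcase ht0le
    have h40 : 40 * y0 ^ 3 * τ < y0 := by
      have h1 : 40 * y0 ^ 2 > 0 := by positivity
      rw [lt_div_iff₀ h1] at hτlt
      nlinarith
    linarith [hkey, hyτge]
  · have h40 : 40 * y0 ^ 3 * τ ≤ y0 := by
      have h1 : (0:ℝ) < 40 * y0 ^ 2 := by positivity
      have : τ ≤ 1 / (40 * y0 ^ 2) := hcase ▸ ht0le
      rw [le_div_iff₀ h1] at this
      nlinarith
    have : y τ ≤ 2 * y0 := by linarith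
    rw [hcase] at this
    linarith
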